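/- arXiv:math/0410605 — 2 statements merged into one kernel-verified Lean document; each statement's English description precedes it below -/
import Mathlib

section
/- Let 0<q<1 and let z be the operator on ℓ²(ℕ) with z f_j = (1-q^{2(j+1)})^{1/2} f_{j+1}. Set y = 1 - z z*. Then y is a positive self-adjoint operator with y f_j = q^{2j} f_j for all j, its spectrum is {q^{2j} : j ∈ ℕ} ∪ {0}, and the commutation relations z y = q⁻² y z and z* y = q² y z* hold. -/
open ContinuousLinearMap
open scoped ENNReal

/-- The standard orthonormal basis of ℓ²(ℕ). -/
noncomputable def fockBasis (j : ℕ) : lp (fun _ : ℕ => ℂ) 2 := lp.single 2 j 1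

namespace FockAux

noncomputable abbrev H := lp (fun _ : ℕ => ℂ) 2

lemma two_toReal : (2 : ℝ≥0∞).toReal = 2 := by norm_num
lemma two_pos' : (0:ℝ) < (2 : ℝ≥0∞).toReal := by norm_num

lemma single_eq_smul (i : ℕ) (a : ℂ) : lp.single 2 i a = a • (fockBasis i) := by
  rw [fockBasis, ← lp.single_smul, smul_eq_mul, mul_one]

lemma clm_ext_basis {A B : H →L[ℂ] H} (h : ∀ j, A (fockBasis j) = B (fockBasis j)) : A = B := by
  refine ContinuousLinearMap.ext fun x => ?_
  have hs := lp.hasSum_single (E := fun _ : ℕ => ℂ) (p := 2) (by norm_num) x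
  have hA : HasSum (fun i => A (lp.single 2 i (x i))) (A x) := A.hasSum hs
  have hB : HasSum (fun i => B (lp.single 2 i (x i))) (B x) := B.hasSum hs
  refine hA.unique ?_
  convert hB using 2 with i
  rw [single_eq_smul, map_smul, map_smul, h i]

lemma coord_eq_inner (x : H) (j : ℕ) : @inner ℂ _ _ (fockBasis j) x = x j := by
  rw [fockBasis, lp.inner_single_left]
  simp [RCLike.inner_apply]

lemma fb_apply (i j : ℕ) : (fockBasis i : ∀ _ : ℕ, ℂ) j = if j = i then 1 else 0 := by
  rw [fockBasis, lp.single_apply]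
  simp [Pi.single_apply]

lemma fb_ne_zero (i : ℕ) : fockBasis i ≠ 0 := by
  intro h
  have : (fockBasis i : ∀ _ : ℕ, ℂ) i = 0 := by rw [h]; rfl
  rw [fb_apply] at this
  simp at this

lemma memD (d : ℕ → ℂ) (C : ℝ) (hC : ∀ j, ‖d j‖ ≤ C) (x : H) :
    Memℓp (fun j => d j * x j) 2 := by
  apply memℓp_gen
  have hx : Summable fun j => ‖x j‖ ^ (2:ℝ≥0∞).toReal := (lp.memℓp x).summable two_pos'
  apply Summable.of_nonneg_of_le (fun j => by positivity)
    (fun j => ?_) (hx.mul_left (C^(2:ℝ)))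
  rw [two_toReal] at *
  have h0 : (0:ℝ) ≤ C := le_trans (norm_nonneg _) (hC 0)
  calc ‖d j * x j‖ ^ (2:ℝ) = (‖d j‖ * ‖x j‖) ^ (2:ℝ) := by rw [norm_mul]
    _ ≤ (C * ‖x j‖) ^ (2:ℝ) := by
        apply Real.rpow_le_rpow (by positivity)
          (mul_le_mul_of_nonneg_right (hC j) (norm_nonneg _)) (by norm_num)
    _ = C ^ (2:ℝ) * ‖x j‖ ^ (2:ℝ) := Real.mul_rpow h0 (norm_nonneg _)

noncomputable def diagOp (d : ℕ → ℂ) (C : ℝ) (hC : ∀ j, ‖d j‖ ≤ C) : H →L[ℂ] H :=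
  LinearMap.mkContinuous
    { toFun := fun x => ⟨fun j => d j * x j, memD d C hC x⟩
      map_add' := fun x y => by
        apply lp.ext; funext j
        simp [mul_add]; rfl
      map_smul' := fun c x => by
        apply lp.ext; funext j
        simp [lp.coeFn_smul]
        ring }
    C
    (fun x => by
      have h0 : (0:ℝ) ≤ C := le_trans (norm_nonneg _) (hC 0)
      apply lp.norm_le_of_forall_sum_le two_pos' (by positivity)
      intro s
      rw [two_toReal]
      calc ∑ i ∈ s, ‖d i * x i‖ ^ (2:ℝ)
          ≤ ∑ i ∈ s, C^(2:ℝ) * ‖x i‖ ^ (2:ℝ) := by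
            apply Finset.sum_le_sum
            intro i _
            calc ‖d i * x i‖ ^ (2:ℝ) = (‖d i‖ * ‖x i‖) ^ (2:ℝ) := by rw [norm_mul]
              _ ≤ (C * ‖x i‖) ^ (2:ℝ) := Real.rpow_le_rpow (by positivity)
                  (mul_le_mul_of_nonneg_right (hC i) (norm_nonneg _)) (by norm_num)
              _ = C ^ (2:ℝ) * ‖x i‖ ^ (2:ℝ) := Real.mul_rpow h0 (norm_nonneg _)
        _ = C^(2:ℝ) * ∑ i ∈ s, ‖x i‖ ^ (2:ℝ) := by rw [Finset.mul_sum]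
        _ ≤ C^(2:ℝ) * ‖x‖ ^ (2:ℝ) := by
            apply mul_le_mul_of_nonneg_left ?_ (by positivity)
            have := lp.sum_rpow_le_norm_rpow two_pos' x s
            rwa [two_toReal] at this
        _ = (C * ‖x‖) ^ (2:ℝ) := (Real.mul_rpow h0 (norm_nonneg _)).symm)

@[simp] lemma diagOp_apply (d : ℕ → ℂ) (C : ℝ) (hC : ∀ j, ‖d j‖ ≤ C) (x : H) (j : ℕ) :
    (diagOp d C hC x : ∀ _ : ℕ, ℂ) j = d j * x j := rfl

section
variable (q : ℝ) (z : H →L[ℂ] H)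
    (hz : ∀ j : ℕ, z (fockBasis j) =
      (Real.sqrt (1 - q ^ (2 * (j + 1))) : ℂ) • fockBasis (j + 1))

include hz in
lemma coord_adj (i j : ℕ) : ((adjoint z) (fockBasis i) : ∀ _ : ℕ, ℂ) j
    = if i = j + 1 then (Real.sqrt (1 - q ^ (2 * (j + 1))) : ℂ) else 0 := by
  rw [← coord_eq_inner, adjoint_inner_right, hz j, inner_smul_left, coord_eq_inner, fb_apply]
  by_cases h : i = j + 1 <;> simp [h, eq_comm, Complex.conj_ofReal]

include hz in
lemma adj_z_zero : (adjoint z) (fockBasis 0) = 0 := by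
  apply lp.ext; funext j
  have := coord_adj q z hz 0 j
  simpa using this

include hz in
lemma adj_z_succ (i : ℕ) : (adjoint z) (fockBasis (i + 1))
    = (Real.sqrt (1 - q ^ (2 * (i + 1))) : ℂ) • fockBasis i := by
  apply lp.ext; funext j
  rw [coord_adj q z hz]
  rw [lp.coeFn_smul]
  simp only [Pi.smul_apply, fb_apply, smul_eq_mul]
  by_cases h : j = i <;> simp [h]
  omega

end

end FockAux

set_option maxHeartbeats 2000000 in
open FockAux in
theorem stmt_2 (q : ℝ) (hq0 : 0 < q) (hq1 : q < 1)
    (z : lp (fun _ : ℕ => ℂ) 2 →L[ℂ] lp (fun _ : ℕ => ℂ) 2)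
    (hz : ∀ j : ℕ, z (fockBasis j) =
      (Real.sqrt (1 - q ^ (2 * (j + 1))) : ℂ) • fockBasis (j + 1))
    (y : lp (fun _ : ℕ => ℂ) 2 →L[ℂ] lp (fun _ : ℕ => ℂ) 2)
    (hy : y = 1 - z ∘L adjoint z) :
    y.IsPositive ∧
    IsSelfAdjoint y ∧
    (∀ j : ℕ, y (fockBasis j) = ((q : ℂ) ^ (2 * j)) • fockBasis j) ∧
    spectrum ℂ y = {x : ℂ | ∃ j : ℕ, x = (q : ℂ) ^ (2 * j)} ∪ {0} ∧
    z ∘L y = (((q : ℂ) ^ 2)⁻¹) • (y ∘L z) ∧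
    adjoint z ∘L y = ((q : ℂ) ^ 2) • (y ∘L adjoint z) := by
  -- basic facts
  have hqpow_lt : ∀ n : ℕ, 0 < n → q ^ n < 1 := fun n hn =>
    pow_lt_one₀ hq0.le hq1 hn.ne'
  have hqpow_le1 : ∀ n : ℕ, q ^ n ≤ 1 := fun n =>
    pow_le_one₀ hq0.le hq1.le
  -- action of y on the basis
  have hyfock : ∀ j : ℕ, y (fockBasis j) = ((q : ℂ) ^ (2 * j)) • fockBasis j := by
    intro j
    rw [hy]
    cases j with
    | zero =>
      simp [ContinuousLinearMap.sub_apply, ContinuousLinearMap.comp_apply,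
        adj_z_zero q z hz]
    | succ i =>
      have hnn : (0:ℝ) ≤ 1 - q ^ (2 * (i + 1)) := by
        have := hqpow_le1 (2 * (i + 1)); linarith
      have hsq : ((Real.sqrt (1 - q ^ (2 * (i + 1))) : ℂ)) ^ 2
          = 1 - (q:ℂ) ^ (2 * (i + 1)) := by
        rw [← Complex.ofReal_pow, Real.sq_sqrt hnn]
        push_cast
        ring
      rw [ContinuousLinearMap.sub_apply, ContinuousLinearMap.comp_apply,
        adj_z_succ q z hz, map_smul, hz i, ContinuousLinearMap.one_apply]
      rw [smul_smul, ← sq, hsq, sub_smul, one_smul]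
      abel
  -- y is the diagonal operator with entries q^(2j)
  set d : ℕ → ℂ := fun j => (q : ℂ) ^ (2 * j) with hd
  have hdnorm : ∀ j, ‖d j‖ ≤ 1 := by
    intro j
    simp only [hd, norm_pow, Complex.norm_real]
    rw [Real.norm_eq_abs, abs_of_nonneg hq0.le]
    exact hqpow_le1 _
  have hyd : y = diagOp d 1 hdnorm := by
    apply clm_ext_basis
    intro j
    rw [hyfock j]
    apply lp.ext; funext k
    rw [lp.coeFn_smul]
    simp only [Pi.smul_apply, diagOp_apply, fb_apply, smul_eq_mul]
    by_cases h : k = j <;> simp [h, hd]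
  -- self-adjointness
  have hsa : IsSelfAdjoint y := by
    rw [hy, ← ContinuousLinearMap.mul_def]
    refine (IsSelfAdjoint.one _).sub ?_
    rw [isSelfAdjoint_iff, star_mul, ContinuousLinearMap.star_eq_adjoint,
      ContinuousLinearMap.star_eq_adjoint, adjoint_adjoint]
  -- positivity
  have hpos : y.IsPositive := by
    refine ⟨hsa.isSymmetric, fun x => ?_⟩
    have hinner := lp.hasSum_inner (𝕜 := ℂ) (y x) x
    have hre := (RCLike.reCLM (K := ℂ)).hasSum hinner
    rw [ContinuousLinearMap.reApplyInnerSelf_apply]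
    rw [show (RCLike.re : ℂ →+ ℝ) = ((RCLike.reCLM (K := ℂ)) : ℂ → ℝ) from rfl]
    refine hre.nonneg fun i => ?_
    simp only [RCLike.reCLM_apply]
    have hcoord : (y x : ∀ _ : ℕ, ℂ) i = d i * x i := by rw [hyd]; rfl
    rw [show (inner ℂ ((y x) i) (x i) : ℂ) = starRingEnd ℂ ((y x) i) * x i by rw [RCLike.inner_apply]; ring,
      hcoord]
    have heq : starRingEnd ℂ (d i * x i) * x i
        = ((q ^ (2*i) * Complex.normSq (x i) : ℝ) : ℂ) := by
      simp only [hd]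
      rw [show ((q:ℂ) ^ (2*i)) = ((q ^ (2*i) : ℝ) : ℂ) by push_cast; ring,
        map_mul, Complex.conj_ofReal, mul_assoc, ← Complex.normSq_eq_conj_mul_self]
      push_cast
      ring
    rw [heq]
    simp only [RCLike.re_to_complex, Complex.ofReal_re]
    have := Complex.normSq_nonneg (x i)
    positivity
  -- spectrum
  set S : Set ℂ := {x : ℂ | ∃ j : ℕ, x = (q : ℂ) ^ (2 * j)} ∪ {0} with hS
  have hSeq : S = insert 0 (Set.range fun j : ℕ => (q:ℂ) ^ (2*j)) := by
    ext x
    simp only [hS, Set.mem_union, Set.mem_setOf_eq, Set.mem_singleton_iff,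
      Set.mem_insert_iff, Set.mem_range]
    constructor
    · rintro (⟨j, rfl⟩ | rfl)
      · exact Or.inr ⟨j, rfl⟩
      · exact Or.inl rfl
    · rintro (rfl | ⟨j, rfl⟩)
      · exact Or.inr rfl
      · exact Or.inl ⟨j, rfl⟩
  have htend : Filter.Tendsto (fun j : ℕ => (q:ℂ) ^ (2*j)) Filter.atTop (nhds 0) := by
    have hh : ∀ j : ℕ, (q:ℂ) ^ (2*j) = ((q:ℂ)^2)^j := fun j => by rw [pow_mul]
    simp only [hh]
    apply tendsto_pow_atTop_nhds_zero_of_norm_lt_one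
    rw [norm_pow, Complex.norm_real, Real.norm_eq_abs, abs_of_nonneg hq0.le]
    exact pow_lt_one₀ hq0.le hq1 (by norm_num)
  have hSclosed : IsClosed S := by
    rw [hSeq]; exact htend.isCompact_insert_range.isClosed
  have hmem : ∀ j : ℕ, (q:ℂ)^(2*j) ∈ spectrum ℂ y := by
    intro j
    rw [spectrum.mem_iff]
    rintro ⟨u, hu⟩
    have happ : (algebraMap ℂ (lp (fun _ : ℕ => ℂ) 2 →L[ℂ] lp (fun _ : ℕ => ℂ) 2)
        ((q:ℂ)^(2*j)) - y) (fockBasis j) = 0 := by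
      rw [Algebra.algebraMap_eq_smul_one, ContinuousLinearMap.sub_apply,
        ContinuousLinearMap.smul_apply, ContinuousLinearMap.one_apply, hyfock j, sub_self]
    have hzero : fockBasis j = 0 := by
      calc fockBasis j = ((↑u⁻¹ * ↑u : lp (fun _ : ℕ => ℂ) 2 →L[ℂ] lp (fun _ : ℕ => ℂ) 2))
            (fockBasis j) := by rw [Units.inv_mul, ContinuousLinearMap.one_apply]
        _ = (↑u⁻¹ : lp (fun _ : ℕ => ℂ) 2 →L[ℂ] lp (fun _ : ℕ => ℂ) 2)
            ((↑u : lp (fun _ : ℕ => ℂ) 2 →L[ℂ] lp (fun _ : ℕ => ℂ) 2) (fockBasis j)) :=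
          ContinuousLinearMap.mul_apply _ _ _
        _ = 0 := by rw [hu, happ, map_zero]
    exact fb_ne_zero j hzero
  have h0mem : (0:ℂ) ∈ spectrum ℂ y :=
    (spectrum.isClosed (𝕜 := ℂ) y).mem_of_tendsto htend (Filter.Eventually.of_forall hmem)
  have hsub : spectrum ℂ y ⊆ S := by
    intro μ hμ
    by_contra hμS
    have hne : S.Nonempty := ⟨0, Or.inr rfl⟩
    have hδ : 0 < Metric.infDist μ S := (hSclosed.notMem_iff_infDist_pos hne).mp hμS
    set δ := Metric.infDist μ S with hδdef
    have hdist : ∀ j : ℕ, δ ≤ ‖μ - d j‖ := by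
      intro j
      have hmemS : ((q:ℂ)^(2*j)) ∈ S := Or.inl ⟨j, rfl⟩
      have h' := Metric.infDist_le_dist_of_mem (x := μ) hmemS
      rw [dist_eq_norm] at h'
      simpa only [hd] using h'
    have hne0 : ∀ j : ℕ, μ - d j ≠ 0 := by
      intro j h
      have h' := hdist j
      rw [h, norm_zero] at h'
      linarith
    have hwnorm : ∀ j, ‖(μ - d j)⁻¹‖ ≤ δ⁻¹ := by
      intro j
      rw [norm_inv]
      exact inv_anti₀ hδ (hdist j)
    set w := diagOp (fun j => (μ - d j)⁻¹) δ⁻¹ hwnorm with hw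
    have hco : ∀ (v : lp (fun _ : ℕ => ℂ) 2) (j : ℕ),
        (((algebraMap ℂ (lp (fun _ : ℕ => ℂ) 2 →L[ℂ] lp (fun _ : ℕ => ℂ) 2) μ - y) v :
          ∀ _ : ℕ, ℂ)) j = (μ - d j) * v j := by
      intro v j
      rw [Algebra.algebraMap_eq_smul_one, ContinuousLinearMap.sub_apply,
        ContinuousLinearMap.smul_apply, ContinuousLinearMap.one_apply, hyd]
      rw [lp.coeFn_sub, Pi.sub_apply, lp.coeFn_smul, Pi.smul_apply]
      rw [diagOp_apply]
      simp only [smul_eq_mul]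
      ring
    rw [spectrum.mem_iff] at hμ
    apply hμ
    refine ⟨⟨algebraMap ℂ _ μ - y, w, ?_, ?_⟩, rfl⟩
    · refine ContinuousLinearMap.ext fun x => ?_
      apply lp.ext; funext j
      rw [ContinuousLinearMap.mul_apply, hco, ContinuousLinearMap.one_apply]
      show (μ - d j) * ((μ - d j)⁻¹ * x j) = x j
      rw [← mul_assoc, mul_inv_cancel₀ (hne0 j), one_mul]
    · refine ContinuousLinearMap.ext fun x => ?_
      apply lp.ext; funext j
      rw [ContinuousLinearMap.mul_apply, ContinuousLinearMap.one_apply]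
      show (μ - d j)⁻¹ *
        (((algebraMap ℂ (lp (fun _ : ℕ => ℂ) 2 →L[ℂ] lp (fun _ : ℕ => ℂ) 2) μ - y) x :
          ∀ _ : ℕ, ℂ)) j = x j
      rw [hco]
      rw [← mul_assoc, inv_mul_cancel₀ (hne0 j), one_mul]
  have hspec : spectrum ℂ y = S := by
    refine Set.Subset.antisymm hsub ?_
    rintro x (⟨j, rfl⟩ | hx)
    · exact hmem j
    · rw [Set.mem_singleton_iff] at hx
      rw [hx]
      exact h0mem
  -- commutation relations
  have hqC : ((q:ℂ)^2) ≠ 0 := pow_ne_zero _ (Complex.ofReal_ne_zero.mpr hq0.ne')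
  have hcomm1 : z ∘L y = (((q : ℂ) ^ 2)⁻¹) • (y ∘L z) := by
    apply clm_ext_basis
    intro j
    simp only [ContinuousLinearMap.comp_apply, ContinuousLinearMap.smul_apply,
      hyfock, hz, map_smul, smul_smul]
    congr 1
    rw [show 2*(j+1) = 2*j + 2 by ring, pow_add]
    have hq' : (q:ℂ) ≠ 0 := Complex.ofReal_ne_zero.mpr hq0.ne'
    field_simp
    ring
  have hcomm2 : adjoint z ∘L y = ((q : ℂ) ^ 2) • (y ∘L adjoint z) := by
    apply clm_ext_basis
    intro j
    cases j with
    | zero =>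
      simp only [ContinuousLinearMap.comp_apply, ContinuousLinearMap.smul_apply,
        hyfock, adj_z_zero q z hz, map_zero, map_smul, smul_zero]
    | succ i =>
      simp only [ContinuousLinearMap.comp_apply, ContinuousLinearMap.smul_apply,
        hyfock, map_smul, adj_z_succ q z hz, smul_smul]
      congr 1
      rw [show 2*(i+1) = 2*i + 2 by ring, pow_add]
      ring
  exact ⟨hpos, hsa, hyfock, hspec, hcomm1, hcomm2⟩
end

section
/- Let 0<q<1 and let z be the operator on ℓ²(ℕ) with z f_j = (1-q^{2(j+1)})^{1/2} f_{j+1}. Then the Fock representation of the twisted CCR algebra is irreducible: any bounded operator commuting with both z and z* is a scalar multiple of the identity. -/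
open ContinuousLinearMap

local notation "H" => lp (fun _ : ℕ => ℂ) 2

lemma fock_coord (x : H) (i : ℕ) :
    @inner ℂ _ _ (fockBasis i) x = x i := by
  rw [fockBasis, lp.inner_single_left]
  simp

lemma fock_ext {x y : H} (h : ∀ i, x i = y i) : x = y :=
  lp.ext (funext h)

lemma fock_apply_ne {i j : ℕ} (h : i ≠ j) : fockBasis j i = 0 := by
  rw [fockBasis]; exact lp.single_apply_ne (E := fun _ : ℕ => ℂ) 2 j 1 h

lemma fock_apply_self (j : ℕ) : fockBasis j j = 1 := by
  rw [fockBasis]; exact lp.single_apply_self (E := fun _ : ℕ => ℂ) 2 j 1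

lemma coord_congr {x y : H} (h : x = y) (i : ℕ) : x i = y i := by rw [h]

lemma coord_smul (c : ℂ) (x : H) (i : ℕ) : (c • x) i = c * x i := by
  have := congrFun (lp.coeFn_smul c x) i
  simpa using this

set_option maxHeartbeats 1000000 in
/-- Irreducibility of the Fock representation of the twisted CCR algebra:
any bounded operator commuting with `z` and `z*` is a scalar. -/
theorem stmt_3 (q : ℝ) (hq0 : 0 < q) (hq1 : q < 1)
    (z : lp (fun _ : ℕ => ℂ) 2 →L[ℂ] lp (fun _ : ℕ => ℂ) 2)
    (hz : ∀ j : ℕ, z (fockBasis j) =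
      (Real.sqrt (1 - q ^ (2 * (j + 1))) : ℂ) • fockBasis (j + 1)) :
    ∀ B : lp (fun _ : ℕ => ℂ) 2 →L[ℂ] lp (fun _ : ℕ => ℂ) 2,
      B ∘L z = z ∘L B → B ∘L adjoint z = adjoint z ∘L B →
      ∃ c : ℂ, B = c • (1 : lp (fun _ : ℕ => ℂ) 2 →L[ℂ] lp (fun _ : ℕ => ℂ) 2) := by
  intro B hBz hBz'
  set s : ℕ → ℝ := fun j => Real.sqrt (1 - q ^ (2 * (j + 1))) with hs
  have hqpow : ∀ j : ℕ, q ^ (2 * (j + 1)) < 1 := fun j =>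
    pow_lt_one₀ hq0.le hq1 (by omega)
  have hLpos : ∀ j : ℕ, 0 < 1 - q ^ (2 * (j + 1)) := fun j => by
    linarith [hqpow j]
  have hspos : ∀ j, 0 < s j := fun j => Real.sqrt_pos.2 (hLpos j)
  have hsne : ∀ j, (s j : ℂ) ≠ 0 := fun j => Complex.ofReal_ne_zero.2 (hspos j).ne'
  have hssq : ∀ j, s j ^ 2 = 1 - q ^ (2 * (j + 1)) := fun j =>
    Real.sq_sqrt (hLpos j).le
  have hLinj : ∀ i j : ℕ, (1 : ℝ) - q ^ (2 * (i + 1)) = 1 - q ^ (2 * (j + 1)) → i = j := by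
    intro i j h
    have h2 : q ^ (2 * (i + 1)) = q ^ (2 * (j + 1)) := by linarith
    have := pow_right_injective₀ hq0 hq1.ne h2
    omega
  -- coordinates of adjoint z
  have hadj : ∀ (x : H) (i : ℕ), (adjoint z x) i = (s i : ℂ) * x (i + 1) := by
    intro x i
    rw [← fock_coord, adjoint_inner_right, hz i, inner_smul_left, fock_coord]
    simp
    exact Or.inl rfl
  have hadj0 : adjoint z (fockBasis 0) = 0 := by
    apply fock_ext
    intro i
    rw [hadj, fock_apply_ne (by omega : i + 1 ≠ 0)]
    simp
  have hadjS : ∀ j : ℕ, adjoint z (fockBasis (j + 1)) = (s j : ℂ) • fockBasis j := by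
    intro j
    apply fock_ext
    intro i
    rw [hadj, coord_smul]
    by_cases hij : i = j
    · subst hij
      rw [fock_apply_self, fock_apply_self]
    · rw [fock_apply_ne (by omega : i + 1 ≠ j + 1), fock_apply_ne hij]
      simp
  -- coordinates of z
  have hzc0 : ∀ x : H, (z x) 0 = 0 := by
    intro x
    rw [← fock_coord, ← adjoint_inner_left, hadj0]
    simp
  have hzcS : ∀ (x : H) (i : ℕ), (z x) (i + 1) = (s i : ℂ) * x i := by
    intro x i
    rw [← fock_coord, ← adjoint_inner_left, hadjS, inner_smul_left, fock_coord]
    simp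
  -- matrix entries of B
  set β : ℕ → ℕ → ℂ := fun j i => (B (fockBasis j)) i with hβ
  have happ : ∀ (x : H), B (z x) = z (B x) := fun x => by
    simpa using ContinuousLinearMap.ext_iff.1 hBz x
  have happ' : ∀ (x : H), B (adjoint z x) = adjoint z (B x) := fun x => by
    simpa using ContinuousLinearMap.ext_iff.1 hBz' x
  -- relation (1): from commuting with z
  have e1 : ∀ j i : ℕ, (s j : ℂ) * β (j + 1) i = (z (B (fockBasis j))) i := by
    intro j i
    have h := happ (fockBasis j)
    rw [hz j, map_smul] at h
    have h2 := coord_congr h i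
    rw [coord_smul] at h2
    exact h2
  have e1z : ∀ j : ℕ, β (j + 1) 0 = 0 := by
    intro j
    have h := e1 j 0
    rw [hzc0] at h
    exact (mul_eq_zero.1 h).resolve_left (hsne j)
  have e1S : ∀ j i : ℕ, (s j : ℂ) * β (j + 1) (i + 1) = (s i : ℂ) * β j i := by
    intro j i
    have h := e1 j (i + 1)
    rwa [hzcS] at h
  -- relation (2): from commuting with z*
  have e2z : ∀ i : ℕ, β 0 (i + 1) = 0 := by
    intro i
    have h := happ' (fockBasis 0)
    rw [hadj0, map_zero] at h
    have h2 := coord_congr h.symm i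
    rw [hadj] at h2
    simp only [lp.coeFn_zero, Pi.zero_apply] at h2
    exact (mul_eq_zero.1 h2).resolve_left (hsne i)
  have e2S : ∀ j i : ℕ, (s j : ℂ) * β j i = (s i : ℂ) * β (j + 1) (i + 1) := by
    intro j i
    have h := happ' (fockBasis (j + 1))
    rw [hadjS, map_smul] at h
    have h2 := coord_congr h i
    rw [coord_smul, hadj] at h2
    exact h2
  -- off-diagonal entries vanish
  have offdiag : ∀ j i : ℕ, i ≠ j → β j i = 0 := by
    intro j i hij
    match j, i with
    | 0, 0 => exact absurd rfl hij
    | 0, (i + 1) => exact e2z i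
    | (j + 1), 0 => exact e1z j
    | (j + 1), (i + 1) =>
      have hij' : i ≠ j := by omega
      have h1 := e1S j i
      have h2 := e2S j i
      have key : ((s j : ℂ) ^ 2 - (s i : ℂ) ^ 2) * β (j + 1) (i + 1) = 0 := by
        have h3 : (s j : ℂ) * ((s j : ℂ) * β (j + 1) (i + 1)) =
            (s i : ℂ) * ((s i : ℂ) * β (j + 1) (i + 1)) := by
          rw [h1, mul_left_comm, h2]
        linear_combination h3
      have hne : ((s j : ℂ) ^ 2 - (s i : ℂ) ^ 2) ≠ 0 := by
        intro h
        apply hij'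
        have h4 : (s i : ℂ) ^ 2 = (s j : ℂ) ^ 2 := by linear_combination -h
        have hr : (s i : ℝ) ^ 2 = (s j : ℝ) ^ 2 := by exact_mod_cast h4
        rw [hssq, hssq] at hr
        exact hLinj i j hr
      exact (mul_eq_zero.1 key).resolve_left hne
  -- diagonal entries are constant
  have diag : ∀ j : ℕ, β j j = β 0 0 := by
    intro j
    induction j with
    | zero => rfl
    | succ n ih =>
      have h := e2S n n
      have := mul_left_cancel₀ (hsne n) h
      rw [← this, ih]
  set c : ℂ := β 0 0 with hc
  have hBbasis : ∀ j : ℕ, B (fockBasis j) = c • fockBasis j := by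
    intro j
    apply fock_ext
    intro i
    rw [coord_smul]
    by_cases hij : i = j
    · subst hij
      show β i i = _
      rw [diag i, fock_apply_self, mul_one]
    · show β j i = _
      rw [offdiag j i hij, fock_apply_ne hij, mul_zero]
  refine ⟨c, ?_⟩
  refine ContinuousLinearMap.ext fun x => ?_
  have hsum : HasSum (fun j : ℕ => (lp.single 2 j (x j) : H)) x :=
    lp.hasSum_single ENNReal.ofNat_ne_top x
  have hsingle : ∀ j : ℕ, (lp.single 2 j (x j) : H) = (x j) • fockBasis j := by
    intro j
    rw [fockBasis, ← lp.single_smul]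
    norm_num
  have hBsum : HasSum (fun j : ℕ => B (lp.single 2 j (x j) : H)) (B x) :=
    hsum.mapL B
  have hBsum' : HasSum (fun j : ℕ => c • (lp.single 2 j (x j) : H)) (B x) := by
    refine hBsum.congr_fun fun j => ?_
    rw [hsingle j, map_smul, hBbasis j, smul_comm]
  have hfin : B x = c • x := hBsum'.unique (hsum.const_smul c)
  simpa using hfin
end
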